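/- arXiv:1809.10538 — 3 statements merged into one kernel-verified Lean document; each statement's English description precedes it below -/
import Mathlib

section
/- Let $\hat{\Sigma}$ and $\Sigma$ be $p\times p$ real positive definite matrices and $\hat{\Gamma}, \Gamma \in \mathbb{R}^p$. Define $\hat{\beta} = \hat{\Sigma}^{-1}\hat{\Gamma}$, $\beta = \Sigma^{-1}\Gamma$, $\Lambda = \lambda_{\min}(\Sigma)$, and $\mathcal{D} = \|\hat{\Sigma} - \Sigma\|_{op}$. If $\mathcal{D} \le \Lambda/2$, then $\tfrac{1}{2}\|\Sigma^{-1}(\hat{\Gamma} - \hat{\Sigma}\beta)\|_2 \le \|\hat{\beta} - \beta\|_2 \le 2\|\Sigma^{-1}(\hat{\Gamma} - \hat{\Sigma}\beta)\|_2$. -/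
open scoped RealInnerProductSpace

/-- deterministic OLS sandwich inequality:
if `‖Σ̂ - Σ‖_op ≤ λ_min(Σ)/2` then
`(1/2)‖Σ⁻¹(Γ̂ - Σ̂β)‖ ≤ ‖β̂ - β‖ ≤ 2‖Σ⁻¹(Γ̂ - Σ̂β)‖`. -/
theorem stmt_0 (p : ℕ)
    (Sig SigHat SigInv SigHatInv :
      EuclideanSpace ℝ (Fin p) →L[ℝ] EuclideanSpace ℝ (Fin p))
    (Γ Γhat βhat β : EuclideanSpace ℝ (Fin p)) (Λ 𝒟 : ℝ)
    -- Σ and Σ̂ are symmetric positive definite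
    (hSigSymm : ∀ x y, ⟪Sig x, y⟫ = ⟪x, Sig y⟫)
    (hSigPos : ∀ x, x ≠ 0 → 0 < ⟪x, Sig x⟫)
    (hSigHatSymm : ∀ x y, ⟪SigHat x, y⟫ = ⟪x, SigHat y⟫)
    (hSigHatPos : ∀ x, x ≠ 0 → 0 < ⟪x, SigHat x⟫)
    -- inverses
    (hInv1 : Sig ∘L SigInv = 1) (hInv2 : SigInv ∘L Sig = 1)
    (hInv3 : SigHat ∘L SigHatInv = 1) (hInv4 : SigHatInv ∘L SigHat = 1)
    -- Λ is the smallest eigenvalue of Σ (greatest lower Rayleigh bound)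
    (hΛ : IsGreatest {c : ℝ | ∀ x, c * ‖x‖ ^ 2 ≤ ⟪x, Sig x⟫} Λ)
    -- 𝒟 is the operator norm of Σ̂ - Σ
    (h𝒟 : 𝒟 = ‖SigHat - Sig‖)
    -- the estimator and the target
    (hβhat : βhat = SigHatInv Γhat) (hβ : β = SigInv Γ)
    (hcond : 𝒟 ≤ Λ / 2) :
    (1 / 2 : ℝ) * ‖SigInv (Γhat - SigHat β)‖ ≤ ‖βhat - β‖ ∧
      ‖βhat - β‖ ≤ 2 * ‖SigInv (Γhat - SigHat β)‖ := by
  set δ := βhat - β with hδ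
  -- Σ̂ δ = Γ̂ - Σ̂ β
  have hSigHatβhat : SigHat βhat = Γhat := by
    rw [hβhat]
    have := congrArg (fun f => f Γhat) hInv3
    simpa using this
  have hSigHatδ : SigHat δ = Γhat - SigHat β := by
    simp [hδ, map_sub, hSigHatβhat]
  -- Λ > 0
  have hΛpos : 0 < Λ := by
    rcases Nat.eq_zero_or_pos p with hp | hp
    · exfalso
      subst hp
      have h1 : Λ + 1 ∈ {c : ℝ | ∀ x : EuclideanSpace ℝ (Fin 0), c * ‖x‖ ^ 2 ≤ ⟪x, Sig x⟫} := by
        intro x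
        have hx : x = 0 := Subsingleton.elim x 0
        simp [hx]
      linarith [hΛ.2 h1]
    · obtain ⟨x0, hx0⟩ : ∃ x : EuclideanSpace ℝ (Fin p), ‖x‖ = 1 :=
        ⟨EuclideanSpace.single ⟨0, hp⟩ 1, by simp⟩
      have hcpt := isCompact_sphere (0 : EuclideanSpace ℝ (Fin p)) 1
      have hne : (Metric.sphere (0 : EuclideanSpace ℝ (Fin p)) 1).Nonempty :=
        ⟨x0, by simp [hx0]⟩
      have hcont : ContinuousOn (fun x : EuclideanSpace ℝ (Fin p) => ⟪x, Sig x⟫)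
          (Metric.sphere (0 : EuclideanSpace ℝ (Fin p)) 1) :=
        (continuous_id.inner Sig.continuous).continuousOn
      obtain ⟨z, hz, hmin⟩ := hcpt.exists_isMinOn hne hcont
      have hz1 : ‖z‖ = 1 := by simpa using hz
      have hzne : z ≠ 0 := by
        intro h; rw [h] at hz1; simp at hz1
      have hm : 0 < ⟪z, Sig z⟫ := hSigPos z hzne
      have hmem : ⟪z, Sig z⟫ ∈ {c : ℝ | ∀ x, c * ‖x‖ ^ 2 ≤ ⟪x, Sig x⟫} := by
        intro x
        rcases eq_or_ne x 0 with rfl | hx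
        · simp
        · have hxn : 0 < ‖x‖ := norm_pos_iff.mpr hx
          set y := ‖x‖⁻¹ • x with hy
          have hymem : y ∈ Metric.sphere (0 : EuclideanSpace ℝ (Fin p)) 1 := by
            simp [hy, norm_smul, abs_of_pos (inv_pos.mpr hxn), inv_mul_cancel₀ hxn.ne']
          have h1 := hmin hymem
          have h2 : ⟪y, Sig y⟫ = ‖x‖⁻¹ * (‖x‖⁻¹ * ⟪x, Sig x⟫) := by
            rw [hy, map_smul, real_inner_smul_left, real_inner_smul_right]
          have h1' : ⟪z, Sig z⟫ ≤ ‖x‖⁻¹ * (‖x‖⁻¹ * ⟪x, Sig x⟫) := h2 ▸ h1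
          calc ⟪z, Sig z⟫ * ‖x‖ ^ 2 ≤ (‖x‖⁻¹ * (‖x‖⁻¹ * ⟪x, Sig x⟫)) * ‖x‖ ^ 2 :=
                mul_le_mul_of_nonneg_right h1' (sq_nonneg _)
            _ = ⟪x, Sig x⟫ * (‖x‖⁻¹ * ‖x‖) ^ 2 := by ring
            _ = ⟪x, Sig x⟫ := by rw [inv_mul_cancel₀ hxn.ne']; ring
      exact lt_of_lt_of_le hm (hΛ.2 hmem)
  -- key: Λ * ‖Σ⁻¹ u‖ ≤ ‖u‖
  have hkey : ∀ u, Λ * ‖SigInv u‖ ≤ ‖u‖ := by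
    intro u
    have hx : Sig (SigInv u) = u := by
      have := congrArg (fun f => f u) hInv1
      simpa using this
    have h1 : Λ * ‖SigInv u‖ ^ 2 ≤ ⟪SigInv u, Sig (SigInv u)⟫ := hΛ.1 (SigInv u)
    have h2 : ⟪SigInv u, Sig (SigInv u)⟫ ≤ ‖SigInv u‖ * ‖Sig (SigInv u)‖ :=
      real_inner_le_norm _ _
    rw [hx] at h1 h2
    rcases eq_or_lt_of_le (norm_nonneg (SigInv u)) with h | h
    · rw [← h]; simpa using norm_nonneg u
    · nlinarith [h]
  -- the perturbation identity
  have hvδ : SigInv (Γhat - SigHat β) - δ = SigInv ((SigHat - Sig) δ) := by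
    have hs : SigInv (Sig δ) = δ := by
      have := congrArg (fun f => f δ) hInv2
      simpa using this
    have hd : (SigHat - Sig) δ = Γhat - SigHat β - Sig δ := by
      rw [ContinuousLinearMap.sub_apply, hSigHatδ]
    have h5 : SigInv ((SigHat - Sig) δ) = SigInv (Γhat - SigHat β) - δ := by
      rw [hd, map_sub, hs]
    exact h5.symm
  have hδnn : (0:ℝ) ≤ ‖δ‖ := norm_nonneg δ
  have hbound : ‖SigInv (Γhat - SigHat β) - δ‖ ≤ (1 / 2) * ‖δ‖ := by
    rw [hvδ]
    have h1 : Λ * ‖SigInv ((SigHat - Sig) δ)‖ ≤ ‖(SigHat - Sig) δ‖ := hkey _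
    have h2 : ‖(SigHat - Sig) δ‖ ≤ 𝒟 * ‖δ‖ := by
      rw [h𝒟]; exact (SigHat - Sig).le_opNorm δ
    have h3 : 𝒟 * ‖δ‖ ≤ (Λ / 2) * ‖δ‖ := mul_le_mul_of_nonneg_right hcond hδnn
    have h4 : Λ * ‖SigInv ((SigHat - Sig) δ)‖ ≤ (Λ / 2) * ‖δ‖ := by linarith
    nlinarith [norm_nonneg (SigInv ((SigHat - Sig) δ))]
  set v := SigInv (Γhat - SigHat β) with hv
  have t1 : ‖v‖ ≤ ‖v - δ‖ + ‖δ‖ := by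
    simpa using norm_add_le (v - δ) δ
  have t2 : ‖δ‖ ≤ ‖v - δ‖ + ‖v‖ := by
    have := norm_add_le (δ - v) v
    simpa [norm_sub_rev] using this
  constructor
  · linarith
  · linarith
end

section
/- Let $\hat{\Sigma}$ and $\Sigma$ be $p\times p$ real positive definite matrices and $\hat{\Gamma}, \Gamma \in \mathbb{R}^p$. Define $\hat{\beta} = \hat{\Sigma}^{-1}\hat{\Gamma}$, $\beta = \Sigma^{-1}\Gamma$, $\Lambda = \lambda_{\min}(\Sigma)$, and $\mathcal{D} = \|\hat{\Sigma} - \Sigma\|_{op}$. If $\mathcal{D} \le \Lambda/2$, then $\|\hat{\beta} - \beta - \Sigma^{-1}(\hat{\Gamma} - \hat{\Sigma}\beta)\|_2 \le \tfrac{2\mathcal{D}}{\Lambda}\,\|\Sigma^{-1}(\hat{\Gamma} - \hat{\Sigma}\beta)\|_2$. -/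
open scoped RealInnerProductSpace

/-- deterministic linear-approximation inequality:
if `‖Σ̂ - Σ‖_op ≤ λ_min(Σ)/2` then
`‖β̂ - β - Σ⁻¹(Γ̂ - Σ̂β)‖ ≤ (2𝒟/Λ)‖Σ⁻¹(Γ̂ - Σ̂β)‖`. -/
theorem stmt_1 (p : ℕ)
    (Sig SigHat SigInv SigHatInv :
      EuclideanSpace ℝ (Fin p) →L[ℝ] EuclideanSpace ℝ (Fin p))
    (Γ Γhat βhat β : EuclideanSpace ℝ (Fin p)) (Λ 𝒟 : ℝ)
    (hSigSymm : ∀ x y, ⟪Sig x, y⟫ = ⟪x, Sig y⟫)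
    (hSigPos : ∀ x, x ≠ 0 → 0 < ⟪x, Sig x⟫)
    (hSigHatSymm : ∀ x y, ⟪SigHat x, y⟫ = ⟪x, SigHat y⟫)
    (hSigHatPos : ∀ x, x ≠ 0 → 0 < ⟪x, SigHat x⟫)
    (hInv1 : Sig ∘L SigInv = 1) (hInv2 : SigInv ∘L Sig = 1)
    (hInv3 : SigHat ∘L SigHatInv = 1) (hInv4 : SigHatInv ∘L SigHat = 1)
    (hΛ : IsGreatest {c : ℝ | ∀ x, c * ‖x‖ ^ 2 ≤ ⟪x, Sig x⟫} Λ)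
    (h𝒟 : 𝒟 = ‖SigHat - Sig‖)
    (hβhat : βhat = SigHatInv Γhat) (hβ : β = SigInv Γ)
    (hcond : 𝒟 ≤ Λ / 2) :
    ‖βhat - β - SigInv (Γhat - SigHat β)‖ ≤
      2 * 𝒟 / Λ * ‖SigInv (Γhat - SigHat β)‖ := by
  have h𝒟0 : 0 ≤ 𝒟 := h𝒟 ▸ norm_nonneg _
  -- Λ > 0
  have hΛpos : 0 < Λ := by
    rcases Nat.eq_zero_or_pos p with hp | hp
    · exfalso
      subst hp
      have h1 : (Λ + 1) ∈ {c : ℝ | ∀ x : EuclideanSpace ℝ (Fin 0), c * ‖x‖ ^ 2 ≤ ⟪x, Sig x⟫} := by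
        intro x
        have hx : x = 0 := Subsingleton.elim x 0
        simp [hx]
      linarith [hΛ.2 h1]
    · have hS : IsCompact (Metric.sphere (0 : EuclideanSpace ℝ (Fin p)) 1) :=
        isCompact_sphere 0 1
      have hne : (Metric.sphere (0 : EuclideanSpace ℝ (Fin p)) 1).Nonempty := by
        refine ⟨EuclideanSpace.single ⟨0, hp⟩ 1, ?_⟩
        simp [EuclideanSpace.norm_single]
      have hcont : Continuous fun x : EuclideanSpace ℝ (Fin p) => ⟪x, Sig x⟫ :=
        continuous_id.inner Sig.continuous
      obtain ⟨u, huS, hmin⟩ := hS.exists_isMinOn hne hcont.continuousOn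
      have hu1 : ‖u‖ = 1 := by simpa using huS
      have hu0 : u ≠ 0 := by intro h; rw [h] at hu1; simp at hu1
      have hm : 0 < ⟪u, Sig u⟫ := hSigPos u hu0
      have hmem : ⟪u, Sig u⟫ ∈ {c : ℝ | ∀ x, c * ‖x‖ ^ 2 ≤ ⟪x, Sig x⟫} := by
        intro x
        by_cases hx : x = 0
        · simp [hx]
        · have hnx : (0:ℝ) < ‖x‖ := norm_pos_iff.mpr hx
          set v : EuclideanSpace ℝ (Fin p) := ‖x‖⁻¹ • x with hv
          have hvS : v ∈ Metric.sphere (0 : EuclideanSpace ℝ (Fin p)) 1 := by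
            simp [hv, norm_smul, abs_of_pos (inv_pos.mpr hnx), inv_mul_cancel₀ hnx.ne']
          have hle : ⟪u, Sig u⟫ ≤ ⟪v, Sig v⟫ := hmin hvS
          have hvv : ⟪v, Sig v⟫ = ‖x‖⁻¹ * (‖x‖⁻¹ * ⟪x, Sig x⟫) := by
            rw [hv, map_smul, real_inner_smul_left, real_inner_smul_right]
          rw [hvv] at hle
          have := mul_le_mul_of_nonneg_left hle (le_of_lt (mul_pos hnx hnx))
          calc ⟪u, Sig u⟫ * ‖x‖ ^ 2 = ‖x‖ * ‖x‖ * ⟪u, Sig u⟫ := by ring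
            _ ≤ ‖x‖ * ‖x‖ * (‖x‖⁻¹ * (‖x‖⁻¹ * ⟪x, Sig x⟫)) := this
            _ = ⟪x, Sig x⟫ := by field_simp
      exact lt_of_lt_of_le hm (hΛ.2 hmem)
  -- coercivity of SigHat
  have hcoer : ∀ x : EuclideanSpace ℝ (Fin p), Λ / 2 * ‖x‖ ^ 2 ≤ ⟪x, SigHat x⟫ := by
    intro x
    have h1 : Λ * ‖x‖ ^ 2 ≤ ⟪x, Sig x⟫ := hΛ.1 x
    have h2 : ⟪x, SigHat x⟫ = ⟪x, Sig x⟫ + ⟪x, (SigHat - Sig) x⟫ := by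
      simp [inner_sub_right]
    have h3 : |⟪x, (SigHat - Sig) x⟫| ≤ 𝒟 * ‖x‖ ^ 2 := by
      calc |⟪x, (SigHat - Sig) x⟫| ≤ ‖x‖ * ‖(SigHat - Sig) x‖ := abs_real_inner_le_norm _ _
        _ ≤ ‖x‖ * (‖SigHat - Sig‖ * ‖x‖) := by
            exact mul_le_mul_of_nonneg_left ((SigHat - Sig).le_opNorm x) (norm_nonneg x)
        _ = 𝒟 * ‖x‖ ^ 2 := by rw [h𝒟]; ring
    have h4 : -(𝒟 * ‖x‖ ^ 2) ≤ ⟪x, (SigHat - Sig) x⟫ := neg_le_of_abs_le h3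
    have h5 : 𝒟 * ‖x‖ ^ 2 ≤ Λ / 2 * ‖x‖ ^ 2 :=
      mul_le_mul_of_nonneg_right hcond (sq_nonneg _)
    nlinarith
  -- bound on SigHatInv
  have hinvbd : ∀ y : EuclideanSpace ℝ (Fin p), ‖SigHatInv y‖ ≤ 2 / Λ * ‖y‖ := by
    intro y
    set x := SigHatInv y with hx
    have hxy : SigHat x = y := by
      have := ContinuousLinearMap.ext_iff.mp hInv3 y
      simpa using this
    have h1 : Λ / 2 * ‖x‖ ^ 2 ≤ ⟪x, SigHat x⟫ := hcoer x
    rw [hxy] at h1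
    have h2 : ⟪x, y⟫ ≤ ‖x‖ * ‖y‖ := real_inner_le_norm x y
    by_cases hx0 : ‖x‖ = 0
    · rw [hx0]; positivity
    · have hnx : 0 < ‖x‖ := lt_of_le_of_ne (norm_nonneg x) (Ne.symm hx0)
      have h3 : Λ / 2 * ‖x‖ ≤ ‖y‖ := by
        have := le_trans h1 h2
        nlinarith
      rw [div_mul_eq_mul_div, le_div_iff₀ hΛpos]
      nlinarith
  -- algebraic identity
  set w := Γhat - SigHat β with hw
  set r := SigInv w with hr
  set v := βhat - β - r with hvdef
  have hid : v = SigHatInv ((Sig - SigHat) r) := by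
    have hSv : SigHat v = (Sig - SigHat) r := by
      have e1 : SigHat βhat = Γhat := by
        rw [hβhat]
        exact ContinuousLinearMap.ext_iff.mp hInv3 Γhat
      have e2 : Sig r = w := by
        rw [hr]
        exact ContinuousLinearMap.ext_iff.mp hInv1 w
      simp only [hvdef, map_sub, e1, ContinuousLinearMap.sub_apply, e2, hw]
    rw [← hSv]
    exact (ContinuousLinearMap.ext_iff.mp hInv4 v).symm
  calc ‖v‖ = ‖SigHatInv ((Sig - SigHat) r)‖ := by rw [hid]
    _ ≤ 2 / Λ * ‖(Sig - SigHat) r‖ := hinvbd _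
    _ ≤ 2 / Λ * (𝒟 * ‖r‖) := by
        apply mul_le_mul_of_nonneg_left _ (by positivity)
        have := (Sig - SigHat).le_opNorm r
        rwa [show ‖Sig - SigHat‖ = 𝒟 by rw [h𝒟, norm_sub_rev]] at this
    _ = 2 * 𝒟 / Λ * ‖r‖ := by ring
end

section
/- Suppose for each $n$, $W_1, \ldots, W_n$ are independent real random variables with means $\mu_i$ and variances $\sigma_i^2$, and let $\eta_n^2 = \frac{1}{n}\sum_{i=1}^n \sigma_i^2$. Then there does not exist a sequence of measurable functions $f_n: \mathbb{R}^n \to \mathbb{R}$ such that $f_n(W_1,\ldots,W_n) - \eta_n^2 \to 0$ in probability for every choice of the sequence of distributions of the $W_i$ (with arbitrary means and variances). -/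
open MeasureTheory Filter

lemma stmt4_integrable_dirac (f : ℝ → ℝ) (a : ℝ) : Integrable f (Measure.dirac a) := by
  have h : (fun _ : ℝ => f a) =ᵐ[Measure.dirac a] f := by
    rw [MeasureTheory.ae_dirac_eq]; exact Filter.eventually_pure.2 rfl
  exact (integrable_const (f a)).congr h

lemma stmt4_pi_dirac {n : ℕ} (c : Fin n → ℝ) :
    (Measure.pi fun i : Fin n => Measure.dirac (c i)) = Measure.dirac c := by
  refine Measure.pi_eq (μ := fun i => Measure.dirac (c i)) fun s hs => ?_
  rw [Measure.dirac_apply]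
  by_cases h : ∀ i, c i ∈ s i
  · rw [Set.indicator_of_mem (by simpa [Set.mem_univ_pi] using h)]
    have h1 : ∀ i : Fin n, Measure.dirac (c i) (s i) = 1 := fun i => by
      rw [Measure.dirac_apply, Set.indicator_of_mem (h i)]; rfl
    simp [h1]
  · push_neg at h
    obtain ⟨i, hi⟩ := h
    rw [Set.indicator_of_notMem (by simp only [Set.mem_univ_pi]; exact fun hh => hi (hh i))]
    exact (Finset.prod_eq_zero (Finset.mem_univ i) (by
      rw [Measure.dirac_apply, Set.indicator_of_notMem hi])).symm

lemma stmt4_one_sub_sum_le_prod {ι : Type*} (s : Finset ι) (f : ι → ℝ)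
    (h0 : ∀ i ∈ s, 0 ≤ f i) (h1 : ∀ i ∈ s, f i ≤ 1) :
    1 - ∑ i ∈ s, f i ≤ ∏ i ∈ s, (1 - f i) := by
  classical
  induction s using Finset.induction_on with
  | empty => simp
  | insert _ _ hx ih =>
    rename_i a s
    rw [Finset.sum_insert hx, Finset.prod_insert hx]
    have ha0 := h0 a (Finset.mem_insert_self a s)
    have ha1 := h1 a (Finset.mem_insert_self a s)
    have hS0 : 0 ≤ ∑ i ∈ s, f i :=
      Finset.sum_nonneg fun i hi => h0 i (Finset.mem_insert_of_mem hi)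
    have ihs := ih (fun i hi => h0 i (Finset.mem_insert_of_mem hi))
      (fun i hi => h1 i (Finset.mem_insert_of_mem hi))
    nlinarith [mul_le_mul_of_nonneg_left ihs (by linarith : (0:ℝ) ≤ 1 - f a)]

/-- there is no sequence of measurable functions `fₙ : ℝⁿ → ℝ`
that consistently estimates the average variance
`ηₙ² = (1/n)∑ᵢ σᵢ²` of independent random variables `W₁,…,Wₙ`, uniformly over
all choices of the marginal distributions (with finite means and variances).
Convergence in probability is with respect to the product of the marginals. -/
theorem stmt_4 :
    ¬ ∃ f : (n : ℕ) → (Fin n → ℝ) → ℝ,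
      (∀ n, Measurable (f n)) ∧
      ∀ μseq : ℕ → Measure ℝ,
        (∀ i, IsProbabilityMeasure (μseq i)) →
        (∀ i, Integrable (fun x => x) (μseq i)) →
        (∀ i, Integrable (fun x => x ^ 2) (μseq i)) →
        ∀ ε > 0,
          Tendsto (fun n =>
              (Measure.pi fun i : Fin n => μseq i)
                {w | ε ≤ |f n w -
                  (n : ℝ)⁻¹ * ∑ i : Fin n,
                    ((∫ x, x ^ 2 ∂μseq i) - (∫ x, x ∂μseq i) ^ 2)|})
            atTop (nhds 0) := by
  rintro ⟨f, hf, h⟩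
  -- the probabilities
  set p : ℕ → ℝ := fun i => (2:ℝ)⁻¹ ^ (i + 2) with hp_def
  have hp0 : ∀ i, 0 < p i := fun i => pow_pos (by norm_num) _
  have hp1 : ∀ i, p i ≤ 1/4 := by
    intro i
    calc p i ≤ (2:ℝ)⁻¹ ^ 2 := pow_le_pow_of_le_one (by norm_num) (by norm_num) (by omega)
    _ = 1/4 := by norm_num
  -- the atoms
  set a : ℕ → ℝ := fun i => Real.sqrt ((p i * (1 - p i))⁻¹) with ha_def
  have hpa : ∀ i, 0 < p i * (1 - p i) := fun i =>
    mul_pos (hp0 i) (by have := hp1 i; linarith)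
  have ha2 : ∀ i, a i ^ 2 = (p i * (1 - p i))⁻¹ := fun i =>
    Real.sq_sqrt (le_of_lt (inv_pos.2 (hpa i)))
  have ha0 : ∀ i, a i ≠ 0 := fun i =>
    ne_of_gt (Real.sqrt_pos.2 (inv_pos.2 (hpa i)))
  -- the mixed measures
  set μ : ℕ → Measure ℝ := fun i =>
    ENNReal.ofReal (1 - p i) • Measure.dirac 0 + ENNReal.ofReal (p i) • Measure.dirac (a i)
    with hμ_def
  have hμprob : ∀ i, IsProbabilityMeasure (μ i) := by
    intro i
    constructor
    have h1p : (0:ℝ) ≤ 1 - p i := by have := hp1 i; linarith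
    simp only [hμ_def, Measure.add_apply, Measure.smul_apply, smul_eq_mul,
      measure_univ, mul_one]
    rw [← ENNReal.ofReal_add h1p (le_of_lt (hp0 i))]
    norm_num
  have hμint : ∀ (g : ℝ → ℝ) (i : ℕ), Integrable g (μ i) := by
    intro g i
    exact ((stmt4_integrable_dirac g 0).smul_measure ENNReal.ofReal_ne_top).add_measure
      ((stmt4_integrable_dirac g (a i)).smul_measure ENNReal.ofReal_ne_top)
  have hμint1 : ∀ i, ∫ x, x ∂μ i = p i * a i := by
    intro i
    rw [hμ_def]
    rw [integral_add_measure ((stmt4_integrable_dirac _ 0).smul_measure ENNReal.ofReal_ne_top)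
      ((stmt4_integrable_dirac _ (a i)).smul_measure ENNReal.ofReal_ne_top)]
    rw [integral_smul_measure, integral_smul_measure, integral_dirac, integral_dirac,
      ENNReal.toReal_ofReal (le_of_lt (hp0 i))]
    simp
  have hμint2 : ∀ i, ∫ x, x ^ 2 ∂μ i = p i * a i ^ 2 := by
    intro i
    rw [hμ_def]
    rw [integral_add_measure ((stmt4_integrable_dirac _ 0).smul_measure ENNReal.ofReal_ne_top)
      ((stmt4_integrable_dirac _ (a i)).smul_measure ENNReal.ofReal_ne_top)]
    rw [integral_smul_measure, integral_smul_measure, integral_dirac, integral_dirac,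
      ENNReal.toReal_ofReal (le_of_lt (hp0 i))]
    simp
  have hvar : ∀ i, (∫ x, x ^ 2 ∂μ i) - (∫ x, x ∂μ i) ^ 2 = 1 := by
    intro i
    rw [hμint1 i, hμint2 i]
    have h1 : p i * a i ^ 2 - (p i * a i) ^ 2 = p i * (1 - p i) * a i ^ 2 := by ring
    rw [h1, ha2 i, mul_inv_cancel₀ (hpa i).ne']
  -- Step A : point masses at 0 force f n 0 → 0
  have hA := h (fun _ => Measure.dirac 0) (fun _ => Measure.dirac.isProbabilityMeasure)
    (fun _ => stmt4_integrable_dirac _ 0) (fun _ => stmt4_integrable_dirac _ 0)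
    (1/4) (by norm_num)
  have hA' : ∀ᶠ n in atTop,
      (Measure.pi fun _ : Fin n => Measure.dirac (0:ℝ))
        {w | 1/4 ≤ |f n w - (n : ℝ)⁻¹ * ∑ i : Fin n,
          ((∫ x, x ^ 2 ∂Measure.dirac (0:ℝ)) - (∫ x, x ∂Measure.dirac (0:ℝ)) ^ 2)|} < 1 :=
    hA.eventually_lt_const (by norm_num)
  have hA'' : ∀ᶠ n in atTop, |f n (fun _ => 0)| < 1/4 := by
    filter_upwards [hA'] with n hn
    rw [show (Measure.pi fun _ : Fin n => Measure.dirac (0:ℝ)) = Measure.dirac (fun _ => 0)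
      from stmt4_pi_dirac (fun _ => 0), Measure.dirac_apply] at hn
    by_contra hc
    push_neg at hc
    have hmem : (fun _ : Fin n => (0:ℝ)) ∈
        {w : Fin n → ℝ | 1/4 ≤ |f n w - (n : ℝ)⁻¹ * ∑ i : Fin n,
          ((∫ x, x ^ 2 ∂Measure.dirac (0:ℝ)) - (∫ x, x ∂Measure.dirac (0:ℝ)) ^ 2)|} := by
      simp only [Set.mem_setOf_eq, integral_dirac]
      norm_num
      exact hc
    rw [Set.indicator_of_mem hmem] at hn
    simp at hn
  -- Step B : the mixed measures
  have hB := h μ hμprob (fun i => hμint _ i) (fun i => hμint _ i) (1/2) (by norm_num)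
  have hB' : ∀ᶠ n in atTop,
      (Measure.pi fun i : Fin n => μ i)
        {w | 1/2 ≤ |f n w - (n : ℝ)⁻¹ * ∑ i : Fin n,
          ((∫ x, x ^ 2 ∂μ i) - (∫ x, x ∂μ i) ^ 2)|} < ENNReal.ofReal (1/2) :=
    hB.eventually_lt_const (by norm_num)
  obtain ⟨n, hn1, hnA, hnB⟩ :=
    ((eventually_ge_atTop 1).and (hA''.and hB')).exists
  -- at this n, derive a contradiction
  set S := {w : Fin n → ℝ | 1/2 ≤ |f n w - (n : ℝ)⁻¹ * ∑ i : Fin n,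
          ((∫ x, x ^ 2 ∂μ i) - (∫ x, x ∂μ i) ^ 2)|} with hS_def
  have hη : (n : ℝ)⁻¹ * ∑ i : Fin n,
      ((∫ x, x ^ 2 ∂μ i) - (∫ x, x ∂μ i) ^ 2) = 1 := by
    simp only [hvar, Finset.sum_const, Finset.card_univ, Fintype.card_fin, nsmul_eq_mul,
      mul_one]
    exact inv_mul_cancel₀ (Nat.cast_ne_zero.mpr (by omega))
  have hmemS : (fun _ : Fin n => (0:ℝ)) ∈ S := by
    rw [hS_def, Set.mem_setOf_eq, hη]
    rw [abs_sub_comm]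
    have : |f n (fun _ => 0)| < 1/4 := hnA
    rw [abs_lt] at this
    rw [le_abs]
    left
    linarith [this.1, this.2]
  -- lower bound on the measure of S
  have hsingle : ({(fun _ : Fin n => (0:ℝ))} : Set (Fin n → ℝ)) =
      Set.pi Set.univ (fun _ : Fin n => ({0} : Set ℝ)) := by
    ext w
    simp [funext_iff, Set.mem_pi]
  have hμ0 : ∀ i : Fin n, μ i {(0:ℝ)} = ENNReal.ofReal (1 - p i) := by
    intro i
    simp only [hμ_def, Measure.add_apply, Measure.smul_apply, smul_eq_mul]
    rw [Measure.dirac_apply, Measure.dirac_apply,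
      Set.indicator_of_mem (Set.mem_singleton _),
      Set.indicator_of_notMem (by simpa using ha0 i)]
    simp
  have hlow : ENNReal.ofReal (1/2) ≤ (Measure.pi fun i : Fin n => μ i) S := by
    calc ENNReal.ofReal (1/2)
        ≤ ENNReal.ofReal (∏ i : Fin n, (1 - p i)) := by
          apply ENNReal.ofReal_le_ofReal
          have hsum : ∑ i : Fin n, p i ≤ 1/2 := by
            rw [Fin.sum_univ_eq_sum_range]
            have : ∀ i, p i = (1/4) * (1/(2:ℝ))^i := by
              intro i
              show (2:ℝ)⁻¹ ^ (i + 2) = 1/4 * (1/(2:ℝ)) ^ i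
              rw [pow_add]; norm_num; ring
            rw [Finset.sum_congr rfl (fun i _ => this i), ← Finset.mul_sum]
            have := sum_geometric_two_le n
            linarith
          have := stmt4_one_sub_sum_le_prod Finset.univ (fun i : Fin n => p (i : ℕ))
            (fun i _ => le_of_lt (hp0 i)) (fun i _ => by have := hp1 (i:ℕ); linarith)
          linarith
      _ = ∏ i : Fin n, ENNReal.ofReal (1 - p i) :=
          ENNReal.ofReal_prod_of_nonneg (fun i _ => by have := hp1 (i:ℕ); linarith)
      _ = (Measure.pi fun i : Fin n => μ i) {(fun _ : Fin n => (0:ℝ))} := by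
          rw [hsingle, Measure.pi_pi]
          exact (Finset.prod_congr rfl fun i _ => (hμ0 i)).symm
      _ ≤ (Measure.pi fun i : Fin n => μ i) S :=
          measure_mono (by simpa [Set.singleton_subset_iff] using hmemS)
  exact absurd hnB (not_lt.2 hlow)
end
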